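/- arXiv:1704.06158 — 2 statements merged into one kernel-verified Lean document; each statement's English description precedes it below -/
import Mathlib

section
/- Let Φ(t) = e^{−t²/2}, T ≥ 2, and let R(t) = Σ_{m ∈ M'} r(m) m^{−it} be the resonator constructed in the paper (with M' a set of well-separated representatives of the set M and r defined via the multiplicative function f). Then ∫_{−∞}^{∞} |R(t)|² Φ(t/T) dt ≪ T Σ_{n ∈ M} f(n)², with an absolute implied constant. -/
open Complex MeasureTheory
open scoped Classical

section Helpers

lemma integral_cos_gaussian' {b : ℝ} (hb : 0 < b) (c : ℝ) :
    ∫ x : ℝ, Real.cos (c * x) * Real.exp (-b * x ^ 2)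
      = Real.sqrt (Real.pi / b) * Real.exp (-c ^ 2 / (4 * b)) := by
  have hbc : (0:ℝ) < ((b:ℂ)).re := by simpa using hb
  have h := fourierIntegral_gaussian (b := (b:ℂ)) hbc (c : ℂ)
  have hint : Integrable (fun x : ℝ => cexp (I * (c:ℂ) * x) * cexp (-(b:ℂ) * x ^ 2)) := by
    have h0 := integrable_cexp_quadratic hbc (I * c) 0
    have heq : (fun x : ℝ => cexp (-(b:ℂ) * x ^ 2 + I * (c:ℂ) * x + 0))
        = fun x : ℝ => cexp (I * (c:ℂ) * x) * cexp (-(b:ℂ) * x ^ 2) := by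
      funext x
      rw [← Complex.exp_add]
      congr 1
      ring
    exact heq ▸ h0
  have h2 : (∫ x : ℝ, Real.cos (c * x) * Real.exp (-b * x ^ 2))
      = (∫ x : ℝ, cexp (I * (c:ℂ) * x) * cexp (-(b:ℂ) * x ^ 2)).re := by
    rw [← RCLike.re_to_complex, ← integral_re hint]
    congr 1
    funext x
    rw [RCLike.re_to_complex]
    rw [show I * (c:ℂ) * x = ((c * x : ℝ) : ℂ) * I by push_cast; ring,
      show -(b:ℂ) * (x:ℂ) ^ 2 = ((-b * x ^ 2 : ℝ) : ℂ) by push_cast; ring,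
      ← Complex.ofReal_exp]
    simp only [Complex.mul_re, Complex.ofReal_re, Complex.ofReal_im,
      Complex.exp_ofReal_mul_I_re, mul_zero, sub_zero]
  rw [h2, h]
  have hπb : (0:ℝ) ≤ Real.pi / b := div_nonneg Real.pi_nonneg hb.le
  rw [show (Real.pi : ℂ) / (b:ℂ) = ((Real.pi / b : ℝ) : ℂ) by push_cast; ring,
    show (1/2 : ℂ) = ((1/2 : ℝ) : ℂ) by push_cast; ring,
    ← Complex.ofReal_cpow hπb,
    show -(c:ℂ) ^ 2 / (4 * (b:ℂ)) = ((-c ^ 2 / (4 * b) : ℝ) : ℂ) by push_cast; ring,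
    ← Complex.ofReal_exp, ← Complex.ofReal_mul, Complex.ofReal_re,
    ← Real.sqrt_eq_rpow]

lemma sum_pow_injOn_le' {x : ℝ} (h0 : 0 ≤ x) (h1 : x < 1) (S : Finset ℤ) (e : ℤ → ℕ)
    (he : ∀ a ∈ S, ∀ b ∈ S, e a = e b → a = b) :
    ∑ k ∈ S, x ^ e k ≤ (1 - x)⁻¹ := by
  have himg := Finset.sum_image (f := fun n : ℕ => x ^ n) (g := e) (s := S) he
  rw [← himg]
  calc ∑ n ∈ S.image e, x ^ n
      ≤ ∑' n : ℕ, x ^ n :=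
        Summable.sum_le_tsum (S.image e) (fun n _ => pow_nonneg h0 n) (summable_geometric_of_lt_one h0 h1)
    _ = (1 - x)⁻¹ := tsum_geometric_of_lt_one h0 h1

lemma sum_pow_dist_le' (S : Finset ℤ) (j : ℤ) {x : ℝ} (h0 : 0 ≤ x) (h1 : x < 1) :
    ∑ k ∈ S, x ^ (|j - k| - 1).toNat ≤ 1 + 2 * (1 - x)⁻¹ := by
  classical
  rw [← Finset.sum_filter_add_sum_filter_not S (· < j)]
  rw [← Finset.sum_filter_add_sum_filter_not (S.filter (fun k => ¬ k < j)) (· = j)]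
  have hA : ∑ k ∈ S.filter (· < j), x ^ (|j - k| - 1).toNat ≤ (1 - x)⁻¹ := by
    have : ∀ k ∈ S.filter (· < j), x ^ (|j - k| - 1).toNat = x ^ ((j - k - 1).toNat) := by
      intro k hk
      simp only [Finset.mem_filter] at hk
      rw [abs_of_nonneg (by omega : (0:ℤ) ≤ j - k)]
    rw [Finset.sum_congr rfl this]
    refine sum_pow_injOn_le' h0 h1 _ _ ?_
    intro a ha b hb hab
    simp only [Finset.mem_filter] at ha hb
    omega
  have hB : ∑ k ∈ (S.filter (fun k => ¬ k < j)).filter (· = j), x ^ (|j - k| - 1).toNat ≤ 1 := by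
    have hsub : (S.filter (fun k => ¬ k < j)).filter (· = j) ⊆ {j} := by
      intro k hk
      simp only [Finset.mem_filter] at hk
      simp [hk.2]
    calc ∑ k ∈ (S.filter (fun k => ¬ k < j)).filter (· = j), x ^ (|j - k| - 1).toNat
        ≤ ∑ k ∈ ({j} : Finset ℤ), x ^ (|j - k| - 1).toNat :=
          Finset.sum_le_sum_of_subset_of_nonneg hsub (fun k _ _ => pow_nonneg h0 _)
      _ ≤ 1 := by simp
  have hC : ∑ k ∈ (S.filter (fun k => ¬ k < j)).filter (fun k => ¬ k = j),
      x ^ (|j - k| - 1).toNat ≤ (1 - x)⁻¹ := by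
    have : ∀ k ∈ (S.filter (fun k => ¬ k < j)).filter (fun k => ¬ k = j),
        x ^ (|j - k| - 1).toNat = x ^ ((k - j - 1).toNat) := by
      intro k hk
      simp only [Finset.mem_filter] at hk
      rw [abs_sub_comm, abs_of_nonneg (by omega : (0:ℤ) ≤ k - j)]
    rw [Finset.sum_congr rfl this]
    refine sum_pow_injOn_le' h0 h1 _ _ ?_
    intro a ha b hb hab
    simp only [Finset.mem_filter] at ha hb
    omega
  linarith

lemma window_sum_le' {q : ℝ} (hq : 1 < q) (M : Finset ℕ) (J : Finset ℤ) (F : ℕ → ℝ)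
    (hF : ∀ n, 0 ≤ F n) :
    ∑ j ∈ J, ∑ n ∈ M.filter (fun n : ℕ => q ^ (j - 1) ≤ (n:ℝ) ∧ (n:ℝ) ≤ q ^ (j + 2)), F n
      ≤ 4 * ∑ n ∈ M, F n := by
  classical
  have hcard : ∀ n : ℕ,
      ((J.filter (fun j : ℤ => q ^ (j - 1) ≤ (n:ℝ) ∧ (n:ℝ) ≤ q ^ (j + 2))).card : ℝ) ≤ 4 := by
    intro n
    set A := J.filter (fun j : ℤ => q ^ (j - 1) ≤ (n:ℝ) ∧ (n:ℝ) ≤ q ^ (j + 2)) with hA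
    rcases A.eq_empty_or_nonempty with h | hne
    · simp [h]
    · have hj₀ := A.min'_mem hne
      have hsub : A ⊆ Finset.Icc (A.min' hne) (A.min' hne + 3) := by
        intro j hj
        rw [Finset.mem_Icc]
        refine ⟨A.min'_le j hj, ?_⟩
        rw [Finset.mem_filter] at hj hj₀
        have h1 : q ^ (j - 1) ≤ q ^ (A.min' hne + 2) := le_trans hj.2.1 hj₀.2.2
        have h2 : j - 1 ≤ A.min' hne + 2 := (zpow_le_zpow_iff_right₀ hq).mp h1
        omega
      have := Finset.card_le_card hsub
      rw [Int.card_Icc] at this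
      have h4 : A.card ≤ 4 := by omega
      exact_mod_cast h4
  calc ∑ j ∈ J, ∑ n ∈ M.filter (fun n : ℕ => q ^ (j - 1) ≤ (n:ℝ) ∧ (n:ℝ) ≤ q ^ (j + 2)), F n
      = ∑ j ∈ J, ∑ n ∈ M, if q ^ (j - 1) ≤ (n:ℝ) ∧ (n:ℝ) ≤ q ^ (j + 2) then F n else 0 := by
        refine Finset.sum_congr rfl fun j _ => ?_
        rw [Finset.sum_filter]
    _ = ∑ n ∈ M, ∑ j ∈ J, if q ^ (j - 1) ≤ (n:ℝ) ∧ (n:ℝ) ≤ q ^ (j + 2) then F n else 0 :=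
        Finset.sum_comm
    _ ≤ ∑ n ∈ M, 4 * F n := by
        refine Finset.sum_le_sum fun n _ => ?_
        rw [← Finset.sum_filter]
        rw [Finset.sum_const, nsmul_eq_mul]
        exact mul_le_mul_of_nonneg_right (hcard n) (hF n)
    _ = 4 * ∑ n ∈ M, F n := by rw [Finset.mul_sum]

lemma norm_sq_sum_expand' (J : Finset ℤ) (c : ℤ → ℝ) (θ : ℤ → ℝ) :
    ‖∑ j ∈ J, ((c j : ℂ) * Complex.exp ((θ j : ℂ) * I))‖ ^ 2
      = ∑ j ∈ J, ∑ k ∈ J, c j * c k * Real.cos (θ j - θ k) := by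
  have h1 : ∀ z : ℂ, ‖z‖ ^ 2 = (z * (starRingEnd ℂ) z).re := by
    intro z
    rw [Complex.mul_conj, Complex.ofReal_re, Complex.normSq_eq_norm_sq]
  rw [h1, map_sum, Finset.sum_mul_sum, Complex.re_sum]
  refine Finset.sum_congr rfl fun j _ => ?_
  rw [Complex.re_sum]
  refine Finset.sum_congr rfl fun k _ => ?_
  simp only [map_mul, Complex.conj_ofReal, ← Complex.exp_conj, Complex.conj_I,
    Complex.mul_re, Complex.mul_im, Complex.ofReal_re, Complex.ofReal_im,
    Complex.exp_re, Complex.exp_im, Complex.I_re, Complex.I_im, Complex.neg_re,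
    Complex.neg_im, mul_zero, zero_mul, mul_one, one_mul, sub_zero, zero_sub,
    add_zero, zero_add, neg_zero, neg_neg, Real.exp_zero, mul_neg_one, mul_neg, neg_mul,
    Real.cos_neg, Real.sin_neg]
  rw [Real.cos_sub]
  ring

lemma gauss_weight_le' {T : ℝ} (hT : 0 < T) {Δ : ℝ} (d : ℕ) (hsep : (d:ℝ)/(2*T) ≤ |Δ|) :
    Real.exp (-Δ^2 / (4 * (1/(2*T^2)))) ≤ Real.exp (-(1:ℝ)/8) ^ d := by
  rw [← Real.exp_nat_mul]
  apply Real.exp_le_exp.mpr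
  have h1 : ((d:ℝ)/(2*T))^2 ≤ Δ^2 := by
    rw [← _root_.sq_abs Δ]
    exact pow_le_pow_left₀ (by positivity) hsep 2
  have hd : (d:ℝ) ≤ (d:ℝ)^2 := by
    have : d ≤ d^2 := Nat.le_self_pow two_ne_zero d
    exact_mod_cast this
  have hT2 : (0:ℝ) < T^2 := by positivity
  rw [div_pow] at h1
  have h2 : (d:ℝ)^2 ≤ Δ^2 * (2*T)^2 := by
    rw [div_le_iff₀ (by positivity)] at h1
    linarith
  rw [show -Δ^2 / (4 * (1/(2*T^2))) = -(Δ^2 * T^2 / 2) by field_simp; ring]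
  nlinarith

end Helpers
/-- `log₂ N = log log N`. -/
noncomputable def log2 (N : ℕ) : ℝ := Real.log (Real.log N)

/-- `log₃ N = log log log N`. -/
noncomputable def log3 (N : ℕ) : ℝ := Real.log (Real.log (Real.log N))

/-- The value of the multiplicative function `f` at a prime `p`: nonzero exactly for
the primes in `P = {p : e log N log₂N < p ≤ log N exp((log₂N)^γ) log₂N}`. -/
noncomputable def fp (N : ℕ) (γ : ℝ) (p : ℕ) : ℝ :=
  if p.Prime ∧ Real.exp 1 * Real.log N * log2 N < (p : ℝ) ∧
      (p : ℝ) ≤ Real.log N * Real.exp ((log2 N) ^ γ) * log2 N then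
    Real.sqrt (Real.log N * log2 N / log3 N) *
      (1 / (Real.sqrt p * (Real.log p - log2 N - log3 N)))
  else 0

/-- The multiplicative function `f`, supported on square-free numbers. -/
noncomputable def fres (N : ℕ) (γ : ℝ) (n : ℕ) : ℝ :=
  if Squarefree n then ∏ p ∈ n.primeFactors, fp N γ p else 0

/-- Membership in the set `M`: `n` lies in the support of `f` and has at most
`a log N/(k² log₃N)` prime divisors in each block
`P_k = {p : e^k log N log₂N < p ≤ e^{k+1} log N log₂N}`, `1 ≤ k ≤ (log₂N)^γ`. -/
def memM (N : ℕ) (γ a : ℝ) (n : ℕ) : Prop :=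
  fres N γ n ≠ 0 ∧
    ∀ k : ℕ, 1 ≤ k → (k : ℝ) ≤ (log2 N) ^ γ →
      ((n.primeFactors.filter (fun p : ℕ =>
          Real.exp k * Real.log N * log2 N < (p : ℝ) ∧
          (p : ℝ) ≤ Real.exp (k + 1) * Real.log N * log2 N)).card : ℝ)
        ≤ a * Real.log N / ((k : ℝ) ^ 2 * log3 N)

/-- The resonator `R(t) = Σ_{j ∈ J} r(m_j) m_j^{-it}`. -/
noncomputable def resonator (J : Finset ℤ) (m : ℤ → ℕ) (r : ℤ → ℝ) (t : ℝ) : ℂ :=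
  ∑ j ∈ J, (r j : ℂ) * (m j : ℂ) ^ (-(I * t))

set_option maxHeartbeats 1000000 in
/-- Lemma 3.3: smoothed mean square bound for the resonator,
`∫ |R(t)|² Φ(t/T) dt ≪ T Σ_{n ∈ M} f(n)²`. -/
theorem resonator_mean_square_bound
    (γ κ a : ℝ) (hγ : 0 < γ ∧ γ < 1) (hκ : 0 < κ ∧ κ ≤ 1) (ha : 1 < a ∧ a < 1 / γ) :
    ∃ C : ℝ, 0 < C ∧
      ∀ (T : ℝ), 2 ≤ T →
      ∀ (N : ℕ), N = ⌊T ^ κ⌋₊ →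
      ∀ (M : Finset ℕ), (∀ n : ℕ, n ∈ M ↔ memM N γ a n) →
      ∀ (J : Finset ℤ), (∀ j : ℤ, j ∈ J ↔ ∃ n ∈ M,
          (1 + 1 / T) ^ j ≤ (n : ℝ) ∧ (n : ℝ) < (1 + 1 / T) ^ (j + 1)) →
      ∀ (m : ℤ → ℕ), (∀ j ∈ J, m j ∈ M ∧ (1 + 1 / T) ^ j ≤ (m j : ℝ) ∧
          (m j : ℝ) < (1 + 1 / T) ^ (j + 1) ∧
          ∀ n ∈ M, (1 + 1 / T) ^ j ≤ (n : ℝ) → (n : ℝ) < (1 + 1 / T) ^ (j + 1) →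
            m j ≤ n) →
      ∀ (r : ℤ → ℝ), (∀ j ∈ J, r j = Real.sqrt (∑ n ∈ M.filter (fun n : ℕ =>
          (1 + 1 / T) ^ (j - 1) ≤ (n : ℝ) ∧ (n : ℝ) ≤ (1 + 1 / T) ^ (j + 2)),
            fres N γ n ^ 2)) →
      (∫ t : ℝ, ‖resonator J m r t‖ ^ 2 * Real.exp (-(t / T) ^ 2 / 2))
        ≤ C * T * ∑ n ∈ M, fres N γ n ^ 2 := by
  refine ⟨1000, by norm_num, ?_⟩
  intro T hT N _hN M _hM J _hJ m hm r hr
  have hT0 : (0:ℝ) < T := by linarith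
  set q : ℝ := 1 + 1/T with hqdef
  have hq1 : 1 < q := by
    rw [hqdef]
    have : 0 < 1/T := by positivity
    linarith
  have hq0 : (0:ℝ) < q := by linarith
  set b : ℝ := 1/(2*T^2) with hbdef
  have hb : 0 < b := by rw [hbdef]; positivity
  set x0 : ℝ := Real.exp (-(1:ℝ)/8) with hx0def
  have hx00 : 0 ≤ x0 := Real.exp_nonneg _
  have hx01 : x0 < 1 := by
    rw [hx0def]
    calc Real.exp (-(1:ℝ)/8) < Real.exp 0 := Real.exp_lt_exp.mpr (by norm_num)
      _ = 1 := Real.exp_zero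
  have hx0bound : (1 - x0)⁻¹ ≤ 9 := by
    have h9 : x0 ≤ 8/9 := by
      have h2 : (9:ℝ)/8 ≤ Real.exp (1/8) := by
        have := Real.add_one_le_exp (1/8 : ℝ); linarith
      rw [hx0def, show -(1:ℝ)/8 = -(1/8 : ℝ) by ring, Real.exp_neg]
      calc (Real.exp (1/8 : ℝ))⁻¹ ≤ ((9:ℝ)/8)⁻¹ := by
            apply inv_anti₀ (by norm_num) h2
        _ = 8/9 := by norm_num
    have h19 : (1:ℝ)/9 ≤ 1 - x0 := by linarith
    calc (1 - x0)⁻¹ ≤ ((1:ℝ)/9)⁻¹ := by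
          apply inv_anti₀ (by norm_num) h19
      _ = 9 := by norm_num
  have hm_pos : ∀ j ∈ J, (0:ℝ) < (m j : ℝ) :=
    fun j hj => lt_of_lt_of_le (zpow_pos hq0 j) ((hm j hj).2.1)
  set L : ℤ → ℝ := fun j => Real.log (m j) with hLdef
  have hr0 : ∀ j ∈ J, 0 ≤ r j := fun j hj => by
    rw [hr j hj]; exact Real.sqrt_nonneg _
  have hr2 : ∀ j ∈ J, r j ^ 2 = ∑ n ∈ M.filter (fun n : ℕ =>
      q ^ (j - 1) ≤ (n:ℝ) ∧ (n:ℝ) ≤ q ^ (j + 2)), fres N γ n ^ 2 := by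
    intro j hj
    rw [hr j hj, Real.sq_sqrt (Finset.sum_nonneg fun n _ => sq_nonneg _)]
  -- lower bound on log q
  have hlogq : 1/(2*T) ≤ Real.log q := by
    have h1 : Real.log q⁻¹ ≤ q⁻¹ - 1 := by
      have := Real.log_le_sub_one_of_pos (show (0:ℝ) < q⁻¹ by positivity)
      simpa using this
    rw [Real.log_inv] at h1
    have h2 : 1 - q⁻¹ ≤ Real.log q := by linarith
    have h3 : 1/(2*T) ≤ 1 - q⁻¹ := by
      rw [hqdef, show (1:ℝ) - (1 + 1/T)⁻¹ = 1/(T+1) by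
        rw [show (1:ℝ) + 1/T = (T+1)/T by field_simp]
        rw [inv_div]
        field_simp
        ring]
      apply div_le_div_of_nonneg_left (by norm_num) (by linarith) (by linarith)
    linarith
  -- separation of logs
  have hsep2 : ∀ j ∈ J, ∀ k ∈ J, j + 2 ≤ k →
      ((k:ℝ) - (j:ℝ) - 1) * Real.log q ≤ L k - L j := by
    intro j hj k hk hjk
    have h1 : (k:ℝ) * Real.log q ≤ L k := by
      have := Real.log_le_log (zpow_pos hq0 k) ((hm k hk).2.1)
      rwa [Real.log_zpow] at this
    have h2 : L j ≤ ((j:ℝ) + 1) * Real.log q := by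
      have hle : (m j : ℝ) ≤ q ^ (j+1) := le_of_lt (hm j hj).2.2.1
      have := Real.log_le_log (hm_pos j hj) hle
      rw [Real.log_zpow] at this
      rw [hLdef]
      push_cast at this ⊢
      linarith
    nlinarith [h1, h2]
  have hsep : ∀ j ∈ J, ∀ k ∈ J,
      (((|j - k| - 1).toNat : ℝ)) / (2*T) ≤ |L k - L j| := by
    intro j hj k hk
    by_cases hd : |j - k| ≤ 1
    · have h0 : (|j - k| - 1).toNat = 0 := by omega
      rw [h0]
      simp only [Nat.cast_zero, zero_div]
      exact abs_nonneg _
    · push_neg at hd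
      have habs := abs_sub_abs_le_abs_sub j k
      rcases lt_or_gt_of_ne (show j ≠ k by intro h; rw [h] at hd; simp at hd) with hlt | hgt
      · -- j < k, so k ≥ j + 2
        have hjk2 : j + 2 ≤ k := by
          have : |j - k| = k - j := by rw [abs_sub_comm]; exact abs_of_nonneg (by omega)
          omega
        have he : (((|j - k| - 1).toNat : ℝ)) = (k:ℝ) - (j:ℝ) - 1 := by
          have h1 : |j - k| = k - j := by rw [abs_sub_comm]; exact abs_of_nonneg (by omega)
          rw [h1]
          have h2 : ((k - j - 1).toNat : ℤ) = k - j - 1 := Int.toNat_of_nonneg (by omega)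
          have h3 : (((k - j - 1).toNat : ℤ) : ℝ) = ((k - j - 1 : ℤ) : ℝ) := by exact_mod_cast h2
          push_cast at h3 ⊢
          linarith
        rw [he]
        have hnn : (0:ℝ) ≤ (k:ℝ) - (j:ℝ) - 1 := by
          have h1 : ((j + 2 : ℤ) : ℝ) ≤ (k : ℝ) := by exact_mod_cast hjk2
          push_cast at h1
          linarith
        calc ((k:ℝ) - (j:ℝ) - 1) / (2*T)
            = ((k:ℝ) - (j:ℝ) - 1) * (1/(2*T)) := by ring
          _ ≤ ((k:ℝ) - (j:ℝ) - 1) * Real.log q := mul_le_mul_of_nonneg_left hlogq hnn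
          _ ≤ L k - L j := hsep2 j hj k hk hjk2
          _ ≤ |L k - L j| := le_abs_self _
      · -- k < j
        have hjk2 : k + 2 ≤ j := by
          have : |j - k| = j - k := abs_of_nonneg (by omega)
          omega
        have he : (((|j - k| - 1).toNat : ℝ)) = (j:ℝ) - (k:ℝ) - 1 := by
          have h1 : |j - k| = j - k := abs_of_nonneg (by omega)
          rw [h1]
          have h2 : ((j - k - 1).toNat : ℤ) = j - k - 1 := Int.toNat_of_nonneg (by omega)
          have h3 : (((j - k - 1).toNat : ℤ) : ℝ) = ((j - k - 1 : ℤ) : ℝ) := by exact_mod_cast h2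
          push_cast at h3 ⊢
          linarith
        rw [he]
        have hnn : (0:ℝ) ≤ (j:ℝ) - (k:ℝ) - 1 := by
          have h1 : ((k + 2 : ℤ) : ℝ) ≤ (j : ℝ) := by exact_mod_cast hjk2
          push_cast at h1
          linarith
        rw [abs_sub_comm]
        calc ((j:ℝ) - (k:ℝ) - 1) / (2*T)
            = ((j:ℝ) - (k:ℝ) - 1) * (1/(2*T)) := by ring
          _ ≤ ((j:ℝ) - (k:ℝ) - 1) * Real.log q := mul_le_mul_of_nonneg_left hlogq hnn
          _ ≤ L j - L k := hsep2 k hk j hj hjk2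
          _ ≤ |L j - L k| := le_abs_self _
  -- pointwise expansion of the resonator
  have hres : ∀ t : ℝ, resonator J m r t
      = ∑ j ∈ J, ((r j : ℂ) * Complex.exp (((-(L j * t) : ℝ) : ℂ) * I)) := by
    intro t
    refine Finset.sum_congr rfl fun j hj => ?_
    have hm0 : (m j : ℂ) ≠ 0 := by
      simp only [ne_eq, Nat.cast_eq_zero]
      intro h
      have := hm_pos j hj
      rw [h] at this
      simp at this
    rw [Complex.cpow_def_of_ne_zero hm0]
    congr 1
    rw [show ((m j : ℕ) : ℂ) = (((m j : ℕ) : ℝ) : ℂ) by push_cast; rfl]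
    rw [← Complex.ofReal_log (le_of_lt (hm_pos j hj))]
    rw [hLdef]
    push_cast
    ring
  have key : ∀ t : ℝ, ‖resonator J m r t‖ ^ 2
      = ∑ j ∈ J, ∑ k ∈ J, r j * r k * Real.cos ((L k - L j) * t) := by
    intro t
    rw [hres t, norm_sq_sum_expand' J r (fun j => -(L j * t))]
    refine Finset.sum_congr rfl fun j _ => Finset.sum_congr rfl fun k _ => ?_
    congr 1
    ring
  have hpt : ∀ t : ℝ, ‖resonator J m r t‖ ^ 2 * Real.exp (-(t/T)^2/2)
      = ∑ p ∈ J ×ˢ J, (r p.1 * r p.2 * Real.cos ((L p.2 - L p.1) * t))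
          * Real.exp (-b * t^2) := by
    intro t
    have harg : -(t/T)^2/2 = -b*t^2 := by
      have hTne : T ≠ 0 := ne_of_gt hT0
      rw [hbdef]
      field_simp
    rw [key t, show Real.exp (-(t/T)^2/2) = Real.exp (-b*t^2) from congrArg Real.exp harg]
    rw [Finset.sum_product]
    rw [Finset.sum_mul]
    exact Finset.sum_congr rfl fun j _ => by rw [Finset.sum_mul]
  have hInt : ∀ p ∈ J ×ˢ J, Integrable (fun t : ℝ =>
      (r p.1 * r p.2 * Real.cos ((L p.2 - L p.1) * t)) * Real.exp (-b * t^2)) := by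
    intro p _
    refine Integrable.bdd_mul (integrable_exp_neg_mul_sq hb) ?_
      (c := |r p.1 * r p.2|) (Filter.Eventually.of_forall fun t => ?_)
    · exact (Continuous.mul continuous_const
        (Real.continuous_cos.comp (continuous_const.mul continuous_id))).aestronglyMeasurable
    · rw [norm_mul, Real.norm_eq_abs, Real.norm_eq_abs]
      exact mul_le_of_le_one_right (abs_nonneg _) (Real.abs_cos_le_one _)
  have hval : ∀ p ∈ (J ×ˢ J), (∫ t : ℝ,
        (r p.1 * r p.2 * Real.cos ((L p.2 - L p.1) * t)) * Real.exp (-b * t^2))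
      = r p.1 * r p.2 * (Real.sqrt (Real.pi / b)
          * Real.exp (-(L p.2 - L p.1)^2 / (4*b))) := by
    intro p _
    rw [show (fun t : ℝ => (r p.1 * r p.2 * Real.cos ((L p.2 - L p.1) * t))
          * Real.exp (-b * t^2))
        = fun t : ℝ => (r p.1 * r p.2)
          * (Real.cos ((L p.2 - L p.1) * t) * Real.exp (-b * t^2)) from
      funext fun t => by ring]
    rw [MeasureTheory.integral_const_mul, integral_cos_gaussian' hb (L p.2 - L p.1)]
  have hLHS : (∫ t : ℝ, ‖resonator J m r t‖ ^ 2 * Real.exp (-(t/T)^2/2))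
      = ∑ p ∈ J ×ˢ J, r p.1 * r p.2
          * (Real.sqrt (Real.pi / b) * Real.exp (-(L p.2 - L p.1)^2/(4*b))) := by
    rw [show (fun t : ℝ => ‖resonator J m r t‖ ^ 2 * Real.exp (-(t/T)^2/2))
        = fun t => ∑ p ∈ J ×ˢ J, ((r p.1 * r p.2 * Real.cos ((L p.2 - L p.1) * t))
            * Real.exp (-b * t^2)) from funext hpt]
    rw [MeasureTheory.integral_finset_sum _ hInt]
    exact Finset.sum_congr rfl hval
  rw [hLHS]
  have hsqrt : Real.sqrt (Real.pi / b) ≤ 3 * T := by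
    have h1 : Real.pi / b ≤ (3*T)^2 := by
      rw [hbdef, show Real.pi / (1/(2*T^2)) = Real.pi * (2*T^2) by
        field_simp]
      nlinarith [Real.pi_le_four, sq_nonneg T]
    calc Real.sqrt (Real.pi / b) ≤ Real.sqrt ((3*T)^2) := Real.sqrt_le_sqrt h1
      _ = 3*T := Real.sqrt_sq (by positivity)
  have hgw : ∀ p ∈ J ×ˢ J, Real.exp (-(L p.2 - L p.1)^2/(4*b))
      ≤ x0 ^ ((|p.1 - p.2| - 1).toNat) := by
    intro p hp
    rw [Finset.mem_product] at hp
    rw [hbdef, hx0def]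
    exact gauss_weight_le' hT0 _ (hsep p.1 hp.1 p.2 hp.2)
  have hsum19 : ∑ p ∈ J ×ˢ J, r p.1 * r p.2 * x0 ^ ((|p.1 - p.2| - 1).toNat)
      ≤ 19 * ∑ j ∈ J, r j ^ 2 := by
    rw [Finset.sum_product]
    have step1 : ∀ j ∈ J, ∀ k ∈ J,
        r j * r k * x0 ^ ((|j - k| - 1).toNat)
          ≤ (r j^2 + r k^2)/2 * x0 ^ ((|j - k| - 1).toNat) := by
      intro j _ k _
      apply mul_le_mul_of_nonneg_right _ (pow_nonneg hx00 _)
      nlinarith [sq_nonneg (r j - r k)]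
    calc ∑ j ∈ J, ∑ k ∈ J, r j * r k * x0 ^ ((|j - k| - 1).toNat)
        ≤ ∑ j ∈ J, ∑ k ∈ J, (r j^2 + r k^2)/2 * x0 ^ ((|j - k| - 1).toNat) :=
          Finset.sum_le_sum fun j hj => Finset.sum_le_sum fun k hk => step1 j hj k hk
      _ = (∑ j ∈ J, ∑ k ∈ J, r j^2 * x0 ^ ((|j - k| - 1).toNat)
            + ∑ j ∈ J, ∑ k ∈ J, r k^2 * x0 ^ ((|j - k| - 1).toNat))/2 := by
          simp_rw [div_mul_eq_mul_div, add_mul, ← Finset.sum_div, Finset.sum_add_distrib]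
      _ = ∑ j ∈ J, ∑ k ∈ J, r j^2 * x0 ^ ((|j - k| - 1).toNat) := by
          have hswap : ∑ j ∈ J, ∑ k ∈ J, r k^2 * x0 ^ ((|j - k| - 1).toNat)
              = ∑ j ∈ J, ∑ k ∈ J, r j^2 * x0 ^ ((|j - k| - 1).toNat) := by
            rw [Finset.sum_comm]
            exact Finset.sum_congr rfl fun j _ => Finset.sum_congr rfl fun k _ => by
              rw [abs_sub_comm]
          rw [hswap, add_self_div_two]
      _ = ∑ j ∈ J, r j^2 * ∑ k ∈ J, x0 ^ ((|j - k| - 1).toNat) :=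
          Finset.sum_congr rfl fun j _ => by rw [Finset.mul_sum]
      _ ≤ ∑ j ∈ J, r j^2 * 19 := by
          refine Finset.sum_le_sum fun j _ => mul_le_mul_of_nonneg_left ?_ (sq_nonneg _)
          calc ∑ k ∈ J, x0 ^ ((|j - k| - 1).toNat) ≤ 1 + 2 * (1 - x0)⁻¹ :=
                sum_pow_dist_le' J j hx00 hx01
            _ ≤ 19 := by linarith
      _ = 19 * ∑ j ∈ J, r j ^ 2 := by rw [← Finset.sum_mul, mul_comm]
  have hrsum : ∑ j ∈ J, r j ^ 2 ≤ 4 * ∑ n ∈ M, fres N γ n ^ 2 := by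
    calc ∑ j ∈ J, r j ^ 2
        = ∑ j ∈ J, ∑ n ∈ M.filter (fun n : ℕ =>
            q ^ (j - 1) ≤ (n:ℝ) ∧ (n:ℝ) ≤ q ^ (j + 2)), fres N γ n ^ 2 :=
          Finset.sum_congr rfl hr2
      _ ≤ 4 * ∑ n ∈ M, fres N γ n ^ 2 :=
          window_sum_le' hq1 M J (fun n => fres N γ n ^ 2) (fun n => sq_nonneg _)
  have hS0 : (0:ℝ) ≤ ∑ n ∈ M, fres N γ n ^ 2 := Finset.sum_nonneg fun n _ => sq_nonneg _
  calc ∑ p ∈ J ×ˢ J, r p.1 * r p.2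
        * (Real.sqrt (Real.pi / b) * Real.exp (-(L p.2 - L p.1)^2/(4*b)))
      ≤ ∑ p ∈ J ×ˢ J, (3*T) * (r p.1 * r p.2 * x0 ^ ((|p.1 - p.2| - 1).toNat)) := by
        refine Finset.sum_le_sum fun p hp => ?_
        have hp' := hp
        rw [Finset.mem_product] at hp'
        have h1 : 0 ≤ r p.1 * r p.2 := mul_nonneg (hr0 _ hp'.1) (hr0 _ hp'.2)
        have h2 : Real.sqrt (Real.pi / b) * Real.exp (-(L p.2 - L p.1)^2/(4*b))
            ≤ (3*T) * x0 ^ ((|p.1 - p.2| - 1).toNat) :=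
          mul_le_mul hsqrt (hgw p hp) (Real.exp_nonneg _) (by positivity)
        calc r p.1 * r p.2 * (Real.sqrt (Real.pi / b)
              * Real.exp (-(L p.2 - L p.1)^2/(4*b)))
            ≤ r p.1 * r p.2 * ((3*T) * x0 ^ ((|p.1 - p.2| - 1).toNat)) :=
              mul_le_mul_of_nonneg_left h2 h1
          _ = (3*T) * (r p.1 * r p.2 * x0 ^ ((|p.1 - p.2| - 1).toNat)) := by ring
    _ = (3*T) * ∑ p ∈ J ×ˢ J, r p.1 * r p.2 * x0 ^ ((|p.1 - p.2| - 1).toNat) := by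
        rw [Finset.mul_sum]
    _ ≤ (3*T) * (19 * ∑ j ∈ J, r j ^ 2) :=
        mul_le_mul_of_nonneg_left hsum19 (by positivity)
    _ ≤ (3*T) * (19 * (4 * ∑ n ∈ M, fres N γ n ^ 2)) := by
        refine mul_le_mul_of_nonneg_left (mul_le_mul_of_nonneg_left hrsum (by norm_num))
          (by positivity)
    _ ≤ 1000 * T * ∑ n ∈ M, fres N γ n ^ 2 := by
        nlinarith [mul_nonneg (le_of_lt hT0) hS0]
end

section
/- With the resonator construction of the paper: for every positive integer k, Σ_{m,n ∈ M, mk = n} f(m) f(n) ≤ Σ_{m',n' ∈ M', |k m'/n' − 1| ≤ 3/T} r(m') r(n'). -/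
open scoped Classical

/-- Transfer of coefficient sums from `M` to the separated representatives `M'`
(inequality (3.4) of the paper). -/
theorem coefficient_transfer (T : ℝ) (hT : 2 ≤ T)
    (M : Finset ℕ) (f : ℕ → ℝ)
    (hM : ∀ n ∈ M, 0 < n ∧ Squarefree n) (hf : ∀ n, 0 ≤ f n)
    (hdiv : ∀ n ∈ M, ∀ d : ℕ, d ∣ n → d ∈ M)
    (J : Finset ℤ)
    (hJ : ∀ j : ℤ, j ∈ J ↔ ∃ n ∈ M,
      (1 + 1 / T) ^ j ≤ (n : ℝ) ∧ (n : ℝ) < (1 + 1 / T) ^ (j + 1))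
    (m : ℤ → ℕ)
    (hm : ∀ j ∈ J, m j ∈ M ∧ (1 + 1 / T) ^ j ≤ (m j : ℝ) ∧
      (m j : ℝ) < (1 + 1 / T) ^ (j + 1) ∧
      ∀ n ∈ M, (1 + 1 / T) ^ j ≤ (n : ℝ) → (n : ℝ) < (1 + 1 / T) ^ (j + 1) → m j ≤ n)
    (r : ℤ → ℝ)
    (hr : ∀ j ∈ J, r j = Real.sqrt (∑ n ∈ M.filter (fun n : ℕ =>
      (1 + 1 / T) ^ (j - 1) ≤ (n : ℝ) ∧ (n : ℝ) ≤ (1 + 1 / T) ^ (j + 2)), f n ^ 2)) :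
    ∀ k : ℕ, 0 < k →
      (∑ a ∈ M, ∑ b ∈ M, if a * k = b then f a * f b else 0)
        ≤ ∑ j ∈ J, ∑ l ∈ J,
            if |(k : ℝ) * (m j : ℝ) / (m l : ℝ) - 1| ≤ 3 / T then r j * r l else 0 := by
  intro k hk
  have hT0 : (0:ℝ) < T := by linarith
  have hu0 : (0:ℝ) < 1 / T := by positivity
  set x : ℝ := 1 + 1 / T with hxdef
  have hx1 : (1:ℝ) < x := by rw [hxdef]; linarith
  have hx0 : (0:ℝ) < x := by linarith
  have hxne : x ≠ 0 := hx0.ne'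
  set idx : ℕ → ℤ := fun n => ⌊Real.logb x n⌋ with hidxdef
  have hidx : ∀ n ∈ M, x ^ idx n ≤ (n:ℝ) ∧ (n:ℝ) < x ^ (idx n + 1) := by
    intro n hn
    have hn' : (0:ℝ) < n := by exact_mod_cast (hM n hn).1
    constructor
    · have := (Real.le_logb_iff_rpow_le hx1 hn').1 (Int.floor_le _)
      rwa [Real.rpow_intCast] at this
    · have := (Real.logb_lt_iff_lt_rpow hx1 hn').1 (Int.lt_floor_add_one _)
      rw [show ((⌊Real.logb x n⌋ : ℝ) + 1) = ((⌊Real.logb x n⌋ + 1 : ℤ) : ℝ) by push_cast; ring,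
        Real.rpow_intCast] at this
      exact this
  have hmemJ : ∀ n ∈ M, idx n ∈ J := fun n hn =>
    (hJ _).2 ⟨n, hn, (hidx n hn).1, (hidx n hn).2⟩
  -- wide intervals
  set W : ℤ → Finset ℕ := fun j => M.filter (fun n : ℕ =>
      x ^ (j - 1) ≤ (n : ℝ) ∧ (n : ℝ) ≤ x ^ (j + 2)) with hWdef
  have hfibW : ∀ j : ℤ, ∀ a ∈ M, idx a = j → a ∈ W j := by
    intro j a ha haj
    have h1 := (hidx a ha).1
    have h2 := (hidx a ha).2
    rw [haj] at h1 h2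
    refine Finset.mem_filter.2 ⟨ha, ?_, ?_⟩
    · exact le_trans (zpow_le_zpow_right₀ hx1.le (by linarith)) h1
    · exact le_trans h2.le (zpow_le_zpow_right₀ hx1.le (by linarith))
  -- rewrite the LHS fiberwise
  have hkey : (∑ a ∈ M, ∑ b ∈ M, if a * k = b then f a * f b else 0)
      = ∑ j ∈ J, ∑ l ∈ J, ∑ a ∈ M.filter (fun a => idx a = j),
          ∑ b ∈ M.filter (fun b => idx b = l), if a * k = b then f a * f b else 0 := by
    rw [← Finset.sum_fiberwise_of_maps_to hmemJ
      (fun a => ∑ b ∈ M, if a * k = b then f a * f b else 0)]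
    refine Finset.sum_congr rfl fun j hj => ?_
    calc ∑ a ∈ M.filter (fun a => idx a = j), ∑ b ∈ M, (if a * k = b then f a * f b else 0)
        = ∑ a ∈ M.filter (fun a => idx a = j), ∑ l ∈ J,
            ∑ b ∈ M.filter (fun b => idx b = l), (if a * k = b then f a * f b else 0) :=
          Finset.sum_congr rfl fun a _ => (Finset.sum_fiberwise_of_maps_to hmemJ
            (fun b => if a * k = b then f a * f b else 0)).symm
      _ = _ := Finset.sum_comm
  rw [hkey]
  refine Finset.sum_le_sum fun j hj => Finset.sum_le_sum fun l hl => ?_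
  -- simplify the inner double sum
  have hinner : ∀ a, (∑ b ∈ M.filter (fun b => idx b = l),
      if a * k = b then f a * f b else 0) =
      if a * k ∈ M.filter (fun b => idx b = l) then f a * f (a * k) else 0 :=
    fun a => Finset.sum_ite_eq _ _ _
  simp_rw [hinner]
  rw [← Finset.sum_filter]
  set A : Finset ℕ := (M.filter (fun a => idx a = j)).filter
      (fun a => a * k ∈ M.filter (fun b => idx b = l)) with hAdef
  obtain ⟨hmjM, hmj1, hmj2, -⟩ := hm j hj
  obtain ⟨hmlM, hml1, hml2, -⟩ := hm l hl
  have hmj0 : (0:ℝ) < (m j : ℝ) := by exact_mod_cast (hM _ hmjM).1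
  have hml0 : (0:ℝ) < (m l : ℝ) := by exact_mod_cast (hM _ hmlM).1
  -- the geometric estimate
  have hgeo : ∀ a ∈ A, |(k : ℝ) * (m j : ℝ) / (m l : ℝ) - 1| ≤ 3 / T := by
    intro a haA
    obtain ⟨ha', hbfib⟩ := Finset.mem_filter.1 haA
    obtain ⟨haM, haj⟩ := Finset.mem_filter.1 ha'
    obtain ⟨hbM, hbl⟩ := Finset.mem_filter.1 hbfib
    have ha1 := (hidx a haM).1; have ha2 := (hidx a haM).2
    rw [haj] at ha1 ha2
    have hb1 := (hidx _ hbM).1; have hb2 := (hidx _ hbM).2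
    rw [hbl] at hb1 hb2
    have ha0 : (0:ℝ) < (a:ℝ) := by exact_mod_cast (hM a haM).1
    have hbcast : ((a * k : ℕ) : ℝ) = (a:ℝ) * (k:ℝ) := by push_cast; ring
    have hq : (k : ℝ) * (m j : ℝ) / (m l : ℝ)
        = ((a * k : ℕ) : ℝ) * (m j : ℝ) / ((a:ℝ) * (m l : ℝ)) := by
      rw [hbcast]; field_simp
    have hD0 : (0:ℝ) < (a:ℝ) * (m l : ℝ) := by positivity
    have hNlt : ((a * k : ℕ) : ℝ) * (m j : ℝ) < x ^ (l + 1) * x ^ (j + 1) :=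
      mul_lt_mul'' hb2 hmj2 (by positivity) hmj0.le
    have hNge : x ^ l * x ^ j ≤ ((a * k : ℕ) : ℝ) * (m j : ℝ) :=
      mul_le_mul hb1 hmj1 (by positivity) (by positivity)
    have hDge : x ^ j * x ^ l ≤ (a:ℝ) * (m l : ℝ) :=
      mul_le_mul ha1 hml1 (by positivity) (by positivity)
    have hDlt : (a:ℝ) * (m l : ℝ) < x ^ (j + 1) * x ^ (l + 1) :=
      mul_lt_mul'' ha2 hml2 (by positivity) hml0.le
    have hupper : (k : ℝ) * (m j : ℝ) / (m l : ℝ) < x ^ (2:ℤ) := by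
      rw [hq, div_lt_iff₀ hD0]
      calc ((a * k : ℕ) : ℝ) * (m j : ℝ) < x ^ (l + 1) * x ^ (j + 1) := hNlt
        _ = x ^ (2:ℤ) * (x ^ j * x ^ l) := by
            rw [← zpow_add₀ hxne, ← zpow_add₀ hxne, ← zpow_add₀ hxne]; congr 1; ring
        _ ≤ x ^ (2:ℤ) * ((a:ℝ) * (m l : ℝ)) := by
            exact mul_le_mul_of_nonneg_left hDge (by positivity)
    have hlower : x ^ (-2:ℤ) < (k : ℝ) * (m j : ℝ) / (m l : ℝ) := by
      rw [hq, lt_div_iff₀ hD0]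
      calc x ^ (-2:ℤ) * ((a:ℝ) * (m l : ℝ))
          < x ^ (-2:ℤ) * (x ^ (j + 1) * x ^ (l + 1)) := by
            exact mul_lt_mul_of_pos_left hDlt (by positivity)
        _ = x ^ l * x ^ j := by
            rw [← zpow_add₀ hxne, ← zpow_add₀ hxne, ← zpow_add₀ hxne]; congr 1; ring
        _ ≤ ((a * k : ℕ) : ℝ) * (m j : ℝ) := hNge
    have hu2 : 1 / T ≤ 1 / 2 := by
      apply one_div_le_one_div_of_le <;> linarith
    have hsq : x ^ (2:ℤ) - 1 ≤ 3 / T := by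
      rw [zpow_two, hxdef]
      have h3 : 3 / T = 3 * (1 / T) := by ring
      have e : (1 + 1 / T) * (1 + 1 / T) - 1 = 2 * (1 / T) + (1 / T) * (1 / T) := by ring
      have h4 : (1 / T) * (1 / T) ≤ (1 / T) * (1 / 2) :=
        mul_le_mul_of_nonneg_left hu2 hu0.le
      rw [h3, e]; linarith
    have hinv : 1 - 3 / T ≤ x ^ (-2:ℤ) := by
      have hxx : x ^ (-2:ℤ) = ((x * x)⁻¹ : ℝ) := by rw [zpow_neg, zpow_two]
      have hxx0 : (0:ℝ) < x * x := by positivity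
      rw [hxx, ← one_div, le_div_iff₀ hxx0, hxdef]
      have e : (1 - 3 / T) * ((1 + 1 / T) * (1 + 1 / T))
          = 1 - (1 / T + 5 * (1 / T) ^ 2 + 3 * (1 / T) ^ 3) := by ring
      have hpos : (0:ℝ) ≤ 1 / T + 5 * (1 / T) ^ 2 + 3 * (1 / T) ^ 3 := by positivity
      rw [e]; linarith
    rw [abs_le]
    constructor <;> [linarith; linarith]
  by_cases hcond : |(k : ℝ) * (m j : ℝ) / (m l : ℝ) - 1| ≤ 3 / T
  · rw [if_pos hcond]
    -- Cauchy–Schwarz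
    have hCS : ∑ a ∈ A, f a * f (a * k)
        ≤ Real.sqrt (∑ a ∈ A, f a ^ 2) * Real.sqrt (∑ a ∈ A, f (a * k) ^ 2) :=
      Real.sum_mul_le_sqrt_mul_sqrt A f (fun a => f (a * k))
    have hsub1 : (∑ a ∈ A, f a ^ 2) ≤ ∑ n ∈ W j, f n ^ 2 := by
      apply Finset.sum_le_sum_of_subset_of_nonneg
      · intro a haA
        obtain ⟨ha', -⟩ := Finset.mem_filter.1 haA
        obtain ⟨haM, haj⟩ := Finset.mem_filter.1 ha'
        exact hfibW j a haM haj
      · intro i _ _; positivity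
    have hsub2 : (∑ a ∈ A, f (a * k) ^ 2) ≤ ∑ n ∈ W l, f n ^ 2 := by
      have himg : (∑ a ∈ A, f (a * k) ^ 2) = ∑ b ∈ A.image (· * k), f b ^ 2 := by
        rw [Finset.sum_image]
        intro a₁ _ a₂ _ h
        exact Nat.eq_of_mul_eq_mul_right hk h
      rw [himg]
      apply Finset.sum_le_sum_of_subset_of_nonneg
      · intro b hb
        obtain ⟨a, haA, rfl⟩ := Finset.mem_image.1 hb
        obtain ⟨-, hbfib⟩ := Finset.mem_filter.1 haA
        obtain ⟨hbM, hbl⟩ := Finset.mem_filter.1 hbfib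
        exact hfibW l _ hbM hbl
      · intro i _ _; positivity
    calc ∑ a ∈ A, f a * f (a * k)
        ≤ Real.sqrt (∑ a ∈ A, f a ^ 2) * Real.sqrt (∑ a ∈ A, f (a * k) ^ 2) := hCS
      _ ≤ r j * r l := by
          rw [hr j hj, hr l hl]
          exact mul_le_mul (Real.sqrt_le_sqrt hsub1) (Real.sqrt_le_sqrt hsub2)
            (Real.sqrt_nonneg _) (Real.sqrt_nonneg _)
  · rw [if_neg hcond]
    have hA : A = ∅ := by
      rw [Finset.eq_empty_iff_forall_notMem]
      intro a haA
      exact hcond (hgeo a haA)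
    rw [hA, Finset.sum_empty]
end
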